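/- Let u ∈ F_{s,R,M}, T a cell with stencil S, z = ℓ(u)+η ∈ ℝ⁹ the noisy 9 cell averages, ũ_T a minimizer over all half-plane indicators V₂ of ‖z−ℓ(v)‖_{ℓ¹}, and ū_S the best L¹(S) approximation of u from V₂. Then ‖u−ũ_T‖_{L¹(T)} ≤ (1+2C₀)‖u−ū_S‖_{L¹(S)} + 2C₀·9^{1−1/p}h²‖η‖_p, where C₀ is the absolute constant from the stencil inverse stability property. -/

import Mathlib

open MeasureTheory
open scoped RealInnerProductSpace BigOperators

noncomputable section

abbrev Plane := EuclideanSpace ℝ (Fin 2)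

def HolderBound (s R M : ℝ) (ψ : ℝ → ℝ) : Prop :=
  ContDiffOn ℝ (⌈s⌉₊ - 1 : ℕ) ψ (Set.Icc (-R) R) ∧
  (∀ j : ℕ, j ≤ ⌈s⌉₊ - 1 → ∀ t ∈ Set.Icc (-R) R,
    |iteratedDerivWithin j ψ (Set.Icc (-R) R) t| ≤ M) ∧
  (∀ a ∈ Set.Icc (-R) R, ∀ b ∈ Set.Icc (-R) R,
    |iteratedDerivWithin (⌈s⌉₊ - 1) ψ (Set.Icc (-R) R) a -
      iteratedDerivWithin (⌈s⌉₊ - 1) ψ (Set.Icc (-R) R) b|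
        ≤ M * |a - b| ^ (s - (⌈s⌉₊ - 1 : ℕ) : ℝ))

def unitSquare : Set Plane := {x | ∀ i, x i ∈ Set.Icc (0 : ℝ) 1}

def MemF (s R M : ℝ) (Ω : Set Plane) : Prop :=
  (∀ y ∈ Ω, ∀ i, y i ∈ Set.Icc R (1 - R)) ∧
  ∀ x ∈ unitSquare, ∃ e₁ e₂ : Plane, ⟪e₁, e₂⟫ = 0 ∧ ‖e₁‖ = 1 ∧ ‖e₂‖ = 1 ∧
    ∃ ψ : ℝ → ℝ, HolderBound s R M ψ ∧
      ∀ z₁ z₂ : ℝ, |z₁| ≤ R → |z₂| ≤ R →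
        ((x + z₁ • e₁ + z₂ • e₂) ∈ Ω ↔ z₂ ≤ ψ z₁)

def stencilCell (h : ℝ) (xb : Plane) (p : ℤ × ℤ) : Set Plane :=
  {y : Plane | |y 0 - (xb 0 + p.1 * h)| ≤ h / 2 ∧ |y 1 - (xb 1 + p.2 * h)| ≤ h / 2}

def stencil (h : ℝ) (xb : Plane) : Set Plane :=
  {y : Plane | |y 0 - xb 0| ≤ 3 * h / 2 ∧ |y 1 - xb 1| ≤ 3 * h / 2}

def cellAvg (h : ℝ) (xb : Plane) (p : ℤ × ℤ) (u : Plane → ℝ) : ℝ :=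
  (h ^ 2)⁻¹ * ∫ y in stencilCell h xb p, u y

def halfPlaneInd (xb : Plane) (nv : Plane) (c : ℝ) : Plane → ℝ :=
  Set.indicator {y : Plane | c ≤ nv 0 * (y 0 - xb 0) + nv 1 * (y 1 - xb 1)} fun _ => (1 : ℝ)

/-- The index set of the 9 cells of a 3×3 stencil. -/
def SIdx : Finset (ℤ × ℤ) := Finset.Icc ((-1 : ℤ), (-1 : ℤ)) (1, 1)

namespace LRB

lemma coordM (i : Fin 2) : Measurable fun y : Plane => y i := (measurable_pi_apply i).comp (WithLp.measurable_ofLp 2 _)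

lemma line_null (i : Fin 2) (c : ℝ) : volume {y : Plane | y i = c} = 0 := by
  have hmp := EuclideanSpace.volume_preserving_symm_measurableEquiv_toLp (Fin 2)
  have hmeas : MeasurableSet {x : Fin 2 → ℝ | x i = c} := by
    have : {x : Fin 2 → ℝ | x i = c} = (fun x : Fin 2 → ℝ => x i) ⁻¹' {c} := rfl
    rw [this]; exact (measurable_pi_apply i) (measurableSet_singleton c)
  have hset : {y : Plane | y i = c}
      = (MeasurableEquiv.toLp 2 (Fin 2 → ℝ)).symm ⁻¹' {x : Fin 2 → ℝ | x i = c} := rfl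
  rw [hset, hmp.measure_preimage hmeas.nullMeasurableSet]
  have h2 : {x : Fin 2 → ℝ | x i = c}
      = Set.pi Set.univ (fun j => if j = i then {c} else Set.univ) := by
    ext x
    simp only [Set.mem_setOf_eq, Set.mem_pi, Set.mem_univ, forall_true_left]
    constructor
    · intro hx j; by_cases hj : j = i <;> simp [hj, hx]
    · intro hx; have := hx i; simpa using this
  rw [h2, volume_pi_pi]
  exact Finset.prod_eq_zero (Finset.mem_univ i) (by simp)

variable {h : ℝ} {xb : Plane}

lemma cell_meas (q : ℤ × ℤ) : MeasurableSet (stencilCell h xb q) := by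
  have : stencilCell h xb q
      = ((fun y : Plane => y 0 - (xb 0 + q.1 * h)) ⁻¹' {t | |t| ≤ h / 2})
        ∩ ((fun y : Plane => y 1 - (xb 1 + q.2 * h)) ⁻¹' {t | |t| ≤ h / 2}) := rfl
  rw [this]
  have habs : MeasurableSet {t : ℝ | |t| ≤ h / 2} :=
    measurableSet_le (continuous_abs.measurable) measurable_const
  exact (((coordM 0).sub_const _) habs).inter (((coordM 1).sub_const _) habs)

lemma half_meas (n : Plane) (c : ℝ) :
    MeasurableSet {y : Plane | c ≤ n 0 * (y 0 - xb 0) + n 1 * (y 1 - xb 1)} :=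
  measurableSet_le measurable_const
    ((((coordM 0).sub_const _).const_mul _).add (((coordM 1).sub_const _).const_mul _))

lemma cell_subset (hh : 0 < h) {q : ℤ × ℤ} (hq : q ∈ SIdx) :
    stencilCell h xb q ⊆ stencil h xb := by
  intro y hy
  obtain ⟨h0, h1⟩ := hy
  have hq' := Finset.mem_Icc.mp hq
  have ha1 : (-1 : ℝ) ≤ (q.1 : ℝ) := by exact_mod_cast hq'.1.1
  have ha2 : (q.1 : ℝ) ≤ 1 := by exact_mod_cast hq'.2.1
  have hb1 : (-1 : ℝ) ≤ (q.2 : ℝ) := by exact_mod_cast hq'.1.2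
  have hb2 : (q.2 : ℝ) ≤ 1 := by exact_mod_cast hq'.2.2
  have h0' := abs_le.mp h0
  have h1' := abs_le.mp h1
  constructor
  · apply abs_le.mpr
    constructor <;> nlinarith
  · apply abs_le.mpr
    constructor <;> nlinarith

lemma stencil_fin (hh : 0 < h) : volume (stencil h xb) ≠ ⊤ := by
  have hsub : stencil h xb ⊆ Metric.closedBall xb (3 * h) := by
    intro y hy
    obtain ⟨h0, h1⟩ := hy
    have h0' := abs_le.mp h0
    have h1' := abs_le.mp h1
    rw [Metric.mem_closedBall, dist_eq_norm, EuclideanSpace.norm_eq]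
    have e0 : (y - xb) 0 = y 0 - xb 0 := rfl
    have e1 : (y - xb) 1 = y 1 - xb 1 := rfl
    rw [Fin.sum_univ_two, e0, e1, Real.norm_eq_abs, Real.norm_eq_abs]
    have hle : |y 0 - xb 0| ^ 2 + |y 1 - xb 1| ^ 2 ≤ (3 * h) ^ 2 := by
      have := sq_abs (y 0 - xb 0)
      have := sq_abs (y 1 - xb 1)
      nlinarith
    calc Real.sqrt (|y 0 - xb 0| ^ 2 + |y 1 - xb 1| ^ 2)
        ≤ Real.sqrt ((3 * h) ^ 2) := Real.sqrt_le_sqrt hle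
      _ = 3 * h := by rw [Real.sqrt_sq (by positivity)]
  exact ne_top_of_le_ne_top measure_closedBall_lt_top.ne (measure_mono hsub)

lemma ind_integrableOn {W : Set Plane} (hW : MeasurableSet W) {A : Set Plane}
    (hA : volume A ≠ ⊤) : IntegrableOn (Set.indicator W fun _ => (1 : ℝ)) A := by
  exact MeasureTheory.Integrable.indicator
    (integrableOn_const hA) hW

def cellIoc (h : ℝ) (xb : Plane) (q : ℤ × ℤ) : Set Plane :=
  {y : Plane | y 0 - (xb 0 + q.1 * h) ∈ Set.Ioc (-(h / 2)) (h / 2) ∧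
               y 1 - (xb 1 + q.2 * h) ∈ Set.Ioc (-(h / 2)) (h / 2)}

lemma cellIoc_meas (q : ℤ × ℤ) : MeasurableSet (cellIoc h xb q) := by
  have : cellIoc h xb q
      = ((fun y : Plane => y 0 - (xb 0 + q.1 * h)) ⁻¹' Set.Ioc (-(h / 2)) (h / 2))
        ∩ ((fun y : Plane => y 1 - (xb 1 + q.2 * h)) ⁻¹' Set.Ioc (-(h / 2)) (h / 2)) := rfl
  rw [this]
  exact (((coordM 0).sub_const _) measurableSet_Ioc).inter
    (((coordM 1).sub_const _) measurableSet_Ioc)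

lemma cellIoc_subset (q : ℤ × ℤ) : cellIoc h xb q ⊆ stencilCell h xb q := by
  intro y hy
  obtain ⟨h0, h1⟩ := hy
  exact ⟨abs_le.mpr ⟨by linarith [h0.1], h0.2⟩, abs_le.mpr ⟨by linarith [h1.1], h1.2⟩⟩

lemma cell_ae (q : ℤ × ℤ) : stencilCell h xb q =ᵐ[volume] cellIoc h xb q := by
  rw [MeasureTheory.ae_eq_set]
  constructor
  · refine measure_mono_null ?_
      (measure_union_null (line_null 0 (xb 0 + q.1 * h - h / 2))
        (line_null 1 (xb 1 + q.2 * h - h / 2)))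
    rintro y ⟨⟨h0, h1⟩, hnc⟩
    have h0' := abs_le.mp h0
    have h1' := abs_le.mp h1
    show y ∈ {y : Plane | y 0 = xb 0 + q.1 * h - h / 2}
      ∪ {y : Plane | y 1 = xb 1 + q.2 * h - h / 2}
    rcases not_and_or.mp hnc with hc | hc
    · rw [Set.mem_Ioc] at hc
      push_neg at hc
      have hle : y 0 - (xb 0 + q.1 * h) ≤ -(h / 2) := by
        by_contra hx
        push_neg at hx
        exact absurd (hc hx) (not_lt.mpr h0'.2)
      left
      show y 0 = xb 0 + q.1 * h - h / 2
      linarith [h0'.1]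
    · rw [Set.mem_Ioc] at hc
      push_neg at hc
      have hle : y 1 - (xb 1 + q.2 * h) ≤ -(h / 2) := by
        by_contra hx
        push_neg at hx
        exact absurd (hc hx) (not_lt.mpr h1'.2)
      right
      show y 1 = xb 1 + q.2 * h - h / 2
      linarith [h1'.1]
  · rw [Set.diff_eq_empty.mpr (cellIoc_subset q)]
    exact measure_empty

lemma cellIoc_disj (hh : 0 < h) :
    Set.Pairwise (↑SIdx : Set (ℤ × ℤ)) (Function.onFun Disjoint fun q => cellIoc h xb q) := by
  intro q hq q' hq' hne
  have hcoord : q.1 ≠ q'.1 ∨ q.2 ≠ q'.2 := by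
    by_contra hcon
    push_neg at hcon
    exact hne (Prod.ext hcon.1 hcon.2)
  rw [Function.onFun, Set.disjoint_left]
  intro y hy hy'
  obtain ⟨hy0, hy1⟩ := hy
  obtain ⟨hy0', hy1'⟩ := hy'
  rw [Set.mem_Ioc] at hy0 hy1 hy0' hy1'
  rcases hcoord with hne1 | hne1
  · have h1 : (1 : ℤ) ≤ |q.1 - q'.1| := Int.one_le_abs (sub_ne_zero.mpr hne1)
    have hge : (1 : ℝ) ≤ |(q.1 : ℝ) - (q'.1 : ℝ)| := by exact_mod_cast h1
    rcases le_abs.mp hge with hx | hx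
    · have hmul : h ≤ ((q.1 : ℝ) - (q'.1 : ℝ)) * h := by nlinarith
      nlinarith [hy0.1, hy0.2, hy0'.1, hy0'.2]
    · have hmul : h ≤ ((q'.1 : ℝ) - (q.1 : ℝ)) * h := by nlinarith
      nlinarith [hy0.1, hy0.2, hy0'.1, hy0'.2]
  · have h1 : (1 : ℤ) ≤ |q.2 - q'.2| := Int.one_le_abs (sub_ne_zero.mpr hne1)
    have hge : (1 : ℝ) ≤ |(q.2 : ℝ) - (q'.2 : ℝ)| := by exact_mod_cast h1
    rcases le_abs.mp hge with hx | hx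
    · have hmul : h ≤ ((q.2 : ℝ) - (q'.2 : ℝ)) * h := by nlinarith
      nlinarith [hy1.1, hy1.2, hy1'.1, hy1'.2]
    · have hmul : h ≤ ((q'.2 : ℝ) - (q.2 : ℝ)) * h := by nlinarith
      nlinarith [hy1.1, hy1.2, hy1'.1, hy1'.2]

lemma sum_cells_le (hh : 0 < h) {f : Plane → ℝ} (hf : IntegrableOn f (stencil h xb)) :
    ∑ q ∈ SIdx, ∫ y in stencilCell h xb q, |f y| ≤ ∫ y in stencil h xb, |f y| := by
  have habs : IntegrableOn (fun y => |f y|) (stencil h xb) := hf.abs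
  have hsub : ∀ q ∈ SIdx, cellIoc h xb q ⊆ stencil h xb :=
    fun q hq => (cellIoc_subset q).trans (cell_subset hh hq)
  have h1 : ∀ q ∈ SIdx, ∫ y in stencilCell h xb q, |f y| = ∫ y in cellIoc h xb q, |f y| :=
    fun q _ => setIntegral_congr_set (cell_ae q)
  rw [Finset.sum_congr rfl h1,
    ← MeasureTheory.integral_biUnion_finset SIdx (fun q _ => cellIoc_meas q)
      (cellIoc_disj hh) (fun q hq => habs.mono_set (hsub q hq))]
  exact setIntegral_mono_set habs (Filter.Eventually.of_forall fun y => abs_nonneg _)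
    ((Set.iUnion₂_subset hsub).eventuallyLE)

lemma avg_sub (hh : 0 < h) (q : ℤ × ℤ) (f g : Plane → ℝ) :
    h ^ 2 * |cellAvg h xb q f - cellAvg h xb q g|
      = |(∫ y in stencilCell h xb q, f y) - ∫ y in stencilCell h xb q, g y| := by
  have h2 : (0 : ℝ) < h ^ 2 := by positivity
  unfold cellAvg
  rw [← mul_sub, abs_mul, abs_of_pos (inv_pos.mpr h2), ← mul_assoc,
    mul_inv_cancel₀ h2.ne', one_mul]

lemma sum_avg_le (hh : 0 < h) {f g : Plane → ℝ} (hfi : IntegrableOn f (stencil h xb))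
    (hgi : IntegrableOn g (stencil h xb)) :
    h ^ 2 * ∑ q ∈ SIdx, |cellAvg h xb q f - cellAvg h xb q g|
      ≤ ∫ y in stencil h xb, |f y - g y| := by
  have key : ∀ q ∈ SIdx, h ^ 2 * |cellAvg h xb q f - cellAvg h xb q g|
      ≤ ∫ y in stencilCell h xb q, |f y - g y| := by
    intro q hq
    have hfc := hfi.mono_set (cell_subset hh hq)
    have hgc := hgi.mono_set (cell_subset hh hq)
    rw [avg_sub hh, ← integral_sub hfc hgc]
    have := norm_integral_le_integral_norm (μ := volume.restrict (stencilCell h xb q))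
      (f := fun y => f y - g y)
    simpa [Real.norm_eq_abs] using this
  calc h ^ 2 * ∑ q ∈ SIdx, |cellAvg h xb q f - cellAvg h xb q g|
      = ∑ q ∈ SIdx, h ^ 2 * |cellAvg h xb q f - cellAvg h xb q g| := Finset.mul_sum _ _ _
    _ ≤ ∑ q ∈ SIdx, ∫ y in stencilCell h xb q, |f y - g y| := Finset.sum_le_sum key
    _ ≤ ∫ y in stencil h xb, |f y - g y| := sum_cells_le hh (hfi.sub hgi)

lemma half_const (hh : 0 < h) {n : Plane} {c : ℝ}
    (hbig : h / 2 * (|n 0| + |n 1|) < |c|) :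
    ∃ ε : ℝ, (ε = 0 ∨ ε = 1) ∧ ∀ y ∈ stencilCell h xb (0, 0), halfPlaneInd xb n c y = ε := by
  have hval : ∀ y ∈ stencilCell h xb (0, 0),
      |n 0 * (y 0 - xb 0) + n 1 * (y 1 - xb 1)| ≤ h / 2 * (|n 0| + |n 1|) := by
    intro y hy
    have hy0 : |y 0 - xb 0| ≤ h / 2 := by simpa using hy.1
    have hy1 : |y 1 - xb 1| ≤ h / 2 := by simpa using hy.2
    calc |n 0 * (y 0 - xb 0) + n 1 * (y 1 - xb 1)|
        ≤ |n 0 * (y 0 - xb 0)| + |n 1 * (y 1 - xb 1)| := abs_add_le _ _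
      _ = |n 0| * |y 0 - xb 0| + |n 1| * |y 1 - xb 1| := by rw [abs_mul, abs_mul]
      _ ≤ |n 0| * (h / 2) + |n 1| * (h / 2) := by
          have := abs_nonneg (n 0); have := abs_nonneg (n 1)
          gcongr
      _ = h / 2 * (|n 0| + |n 1|) := by ring
  by_cases hc : 0 < c
  · refine ⟨0, Or.inl rfl, fun y hy => ?_⟩
    have hvy := hval y hy
    have : ¬ c ≤ n 0 * (y 0 - xb 0) + n 1 * (y 1 - xb 1) := by
      have habs := le_abs_self (n 0 * (y 0 - xb 0) + n 1 * (y 1 - xb 1))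
      rw [abs_of_pos hc] at hbig
      push_neg
      linarith
    have hnot : y ∉ {y : Plane | c ≤ n 0 * (y 0 - xb 0) + n 1 * (y 1 - xb 1)} := this
    show Set.indicator {y : Plane | c ≤ n 0 * (y 0 - xb 0) + n 1 * (y 1 - xb 1)}
      (fun _ => (1 : ℝ)) y = 0
    exact Set.indicator_of_notMem hnot _
  · refine ⟨1, Or.inr rfl, fun y hy => ?_⟩
    have hvy := hval y hy
    push_neg at hc
    rw [abs_of_nonpos hc] at hbig
    have habs := neg_abs_le (n 0 * (y 0 - xb 0) + n 1 * (y 1 - xb 1))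
    have : c ≤ n 0 * (y 0 - xb 0) + n 1 * (y 1 - xb 1) := by linarith
    have hmem : y ∈ {y : Plane | c ≤ n 0 * (y 0 - xb 0) + n 1 * (y 1 - xb 1)} := this
    show Set.indicator {y : Plane | c ≤ n 0 * (y 0 - xb 0) + n 1 * (y 1 - xb 1)}
      (fun _ => (1 : ℝ)) y = 1
    exact Set.indicator_of_mem hmem _

lemma int_abs_const {T : Set Plane} (hT : MeasurableSet T) {f g : Plane → ℝ}
    (hfi : IntegrableOn f T) (hgi : IntegrableOn g T)
    (hf0 : ∀ y, 0 ≤ f y) (hf1 : ∀ y, f y ≤ 1)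
    {ε : ℝ} (hε : ε = 0 ∨ ε = 1) (hg : ∀ y ∈ T, g y = ε) :
    ∫ y in T, |f y - g y| = |(∫ y in T, f y) - ∫ y in T, g y| := by
  rcases hε with hε | hε
  · subst hε
    have hgz : ∫ y in T, g y = 0 := by
      rw [setIntegral_congr_fun hT (fun y hy => hg y hy)]
      simp
    have hl : ∫ y in T, |f y - g y| = ∫ y in T, f y := by
      apply setIntegral_congr_fun hT
      intro y hy
      show |f y - g y| = f y
      rw [hg y hy, sub_zero, abs_of_nonneg (hf0 y)]
    rw [hl, hgz, sub_zero, abs_of_nonneg (setIntegral_nonneg hT fun y _ => hf0 y)]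
  · subst hε
    have hl : ∫ y in T, |f y - g y| = ∫ y in T, (g y - f y) := by
      apply setIntegral_congr_fun hT
      intro y hy
      show |f y - g y| = g y - f y
      rw [hg y hy]
      rw [abs_sub_comm, abs_of_nonneg (by linarith [hf1 y])]
    rw [hl, integral_sub hgi hfi]
    have hnn : 0 ≤ (∫ y in T, g y) - ∫ y in T, f y := by
      rw [← integral_sub hgi hfi]
      apply setIntegral_nonneg hT
      intro y hy
      rw [hg y hy]
      linarith [hf1 y]
    rw [abs_sub_comm, abs_of_nonneg hnn]

end LRB

/-- **Local recovery bound on a cell** (Lemma 5.1): if `ũ_T` is an `ℓ¹` best fit to the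
noisy stencil cell averages `z = ℓ(u) + η` among all half-plane indicators `V₂`, and
`ū_S` is a best `L¹(S)` approximation of `u` from `V₂`, then
`‖u − ũ_T‖_{L¹(T)} ≤ (1 + 2C₀)‖u − ū_S‖_{L¹(S)} + 2C₀ · 9^{1−1/p} h² ‖η‖_p`,
where `C₀ ≥ 1` is the absolute constant of the stencil inverse stability property. -/
theorem local_recovery_bound
    (s R M : ℝ) (hs : 1 ≤ s) (hM : 0 < M)
    (h : ℝ) (hh : 0 < h) (xb : Plane) (hS : stencil h xb ⊆ unitSquare)
    (Ω : Set Plane) (hΩmeas : MeasurableSet Ω) (hΩ : MemF s R M Ω)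
    (u : Plane → ℝ) (hu : u = Set.indicator Ω fun _ => (1 : ℝ))
    (p : ℝ) (hp : 1 ≤ p)
    (C₀ : ℝ) (hC₀1 : 1 ≤ C₀)
    (hC₀ : ∀ (nu nv : Plane) (cu cv : ℝ), ‖nu‖ = 1 → ‖nv‖ = 1 →
      |cu| ≤ h / 2 * (|nu 0| + |nu 1|) → |cv| ≤ h / 2 * (|nv 0| + |nv 1|) →
      (∫ y in stencil h xb, |halfPlaneInd xb nu cu y - halfPlaneInd xb nv cv y|)
        ≤ C₀ * h ^ 2 * ∑ q ∈ SIdx,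
            |cellAvg h xb q (halfPlaneInd xb nu cu) - cellAvg h xb q (halfPlaneInd xb nv cv)|)
    (η z : ℤ × ℤ → ℝ) (hz : ∀ q ∈ SIdx, z q = cellAvg h xb q u + η q)
    (nt : Plane) (ct : ℝ) (hnt : ‖nt‖ = 1)
    (htmin : ∀ (nv : Plane) (c : ℝ), ‖nv‖ = 1 →
      ∑ q ∈ SIdx, |z q - cellAvg h xb q (halfPlaneInd xb nt ct)|
        ≤ ∑ q ∈ SIdx, |z q - cellAvg h xb q (halfPlaneInd xb nv c)|)
    (nb : Plane) (cb : ℝ) (hnb : ‖nb‖ = 1)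
    (hbmin : ∀ (nv : Plane) (c : ℝ), ‖nv‖ = 1 →
      (∫ y in stencil h xb, |u y - halfPlaneInd xb nb cb y|)
        ≤ ∫ y in stencil h xb, |u y - halfPlaneInd xb nv c y|) :
    (∫ y in stencilCell h xb (0, 0), |u y - halfPlaneInd xb nt ct y|)
      ≤ (1 + 2 * C₀) * (∫ y in stencil h xb, |u y - halfPlaneInd xb nb cb y|)
        + 2 * C₀ * (9 : ℝ) ^ (1 - 1 / p) * h ^ 2 * (∑ q ∈ SIdx, |η q| ^ p) ^ (1 / p) := by
  classical
  have hz00 : ((0, 0) : ℤ × ℤ) ∈ SIdx := by decide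
  set S := stencil h xb with hSdef
  set T := stencilCell h xb (0, 0) with hTdef
  have hTsub : T ⊆ S := LRB.cell_subset hh hz00
  have hSfin : volume S ≠ ⊤ := LRB.stencil_fin hh
  have hTmeas : MeasurableSet T := LRB.cell_meas _
  set ut := halfPlaneInd xb nt ct with hutdef
  set ub := halfPlaneInd xb nb cb with hubdef
  have huS : IntegrableOn u S := by
    rw [hu]; exact LRB.ind_integrableOn hΩmeas hSfin
  have hutS : IntegrableOn ut S := LRB.ind_integrableOn (LRB.half_meas nt ct) hSfin
  have hubS : IntegrableOn ub S := LRB.ind_integrableOn (LRB.half_meas nb cb) hSfin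
  have huT : IntegrableOn u T := huS.mono_set hTsub
  have hutT : IntegrableOn ut T := hutS.mono_set hTsub
  have hubT : IntegrableOn ub T := hubS.mono_set hTsub
  have hu01 : ∀ y, 0 ≤ u y ∧ u y ≤ 1 := by
    intro y; rw [hu]; by_cases hw : y ∈ Ω <;> simp [Set.indicator_apply, hw]
  have hut01 : ∀ y, 0 ≤ ut y ∧ ut y ≤ 1 := by
    intro y
    rw [hutdef]
    unfold halfPlaneInd
    by_cases hw : y ∈ {y : Plane | ct ≤ nt 0 * (y 0 - xb 0) + nt 1 * (y 1 - xb 1)} <;>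
      simp [Set.indicator_apply, hw]
  set B := ∫ y in S, |u y - ub y| with hBdef
  have hB0 : 0 ≤ B := integral_nonneg fun y => abs_nonneg _
  set E := ∑ q ∈ SIdx, |η q| with hEdef
  have hE0 : (0 : ℝ) ≤ E := Finset.sum_nonneg fun q _ => abs_nonneg _
  set N := (∑ q ∈ SIdx, |η q| ^ p) ^ (1 / p) with hNdef
  have hN0 : 0 ≤ N :=
    Real.rpow_nonneg (Finset.sum_nonneg fun q _ => Real.rpow_nonneg (abs_nonneg _) _) _
  set K := (9 : ℝ) ^ (1 - 1 / p) with hKdef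
  have hK0 : (0 : ℝ) ≤ K := Real.rpow_nonneg (by norm_num) _
  have hEKN : E ≤ K * N := by
    have h9 := Real.inner_le_weight_mul_Lp_of_nonneg SIdx hp (fun _ => 1) (fun q => |η q|)
      (fun _ => zero_le_one) (fun q => abs_nonneg _)
    have hcard : SIdx.card = 9 := by decide
    simpa [hEdef, hNdef, hKdef, hcard, one_div] using h9
  set D := ∑ q ∈ SIdx, |cellAvg h xb q u - cellAvg h xb q ub| with hDdef
  have hD0 : (0 : ℝ) ≤ D := Finset.sum_nonneg fun q _ => abs_nonneg _
  have hDB : h ^ 2 * D ≤ B := LRB.sum_avg_le hh huS hubS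
  have hsum_ub : ∑ q ∈ SIdx, |z q - cellAvg h xb q ub| ≤ D + E := by
    rw [hDdef, hEdef, ← Finset.sum_add_distrib]
    apply Finset.sum_le_sum
    intro q hq
    have heq : z q - cellAvg h xb q ub = (cellAvg h xb q u - cellAvg h xb q ub) + η q := by
      rw [hz q hq]; ring
    rw [heq]
    exact abs_add_le _ _
  have hsum_ut : ∑ q ∈ SIdx, |z q - cellAvg h xb q ut| ≤ D + E :=
    le_trans (htmin nb cb hnb) hsum_ub
  have hh2 : (0 : ℝ) ≤ h ^ 2 := sq_nonneg h
  have hhE : h ^ 2 * E ≤ h ^ 2 * (K * N) := mul_le_mul_of_nonneg_left hEKN hh2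
  have hKN0 : 0 ≤ K * N := mul_nonneg hK0 hN0
  have hC₀0 : (0 : ℝ) ≤ C₀ := le_trans zero_le_one hC₀1
  have hf2 : 0 ≤ (C₀ - 1) * (h ^ 2 * (K * N)) :=
    mul_nonneg (sub_nonneg.mpr hC₀1) (mul_nonneg hh2 hKN0)
  have hf3 : 0 ≤ C₀ * B := mul_nonneg hC₀0 hB0
  have hf4 : 0 ≤ (C₀ - 1) * B := mul_nonneg (sub_nonneg.mpr hC₀1) hB0
  have hi_uub_T : IntegrableOn (fun y => |u y - ub y|) T volume := (huT.sub hubT).abs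
  have hi_utub_T : IntegrableOn (fun y => |ut y - ub y|) T volume := (hutT.sub hubT).abs
  have hi_uut_T : IntegrableOn (fun y => |u y - ut y|) T volume := (huT.sub hutT).abs
  have hi_uub_S : IntegrableOn (fun y => |u y - ub y|) S volume := (huS.sub hubS).abs
  have hi_utub_S : IntegrableOn (fun y => |ut y - ub y|) S volume := (hutS.sub hubS).abs
  have step1 : ∫ y in T, |u y - ut y|
      ≤ (∫ y in T, |u y - ub y|) + ∫ y in T, |ut y - ub y| := by
    rw [← integral_add hi_uub_T hi_utub_T]
    refine integral_mono hi_uut_T (hi_uub_T.add hi_utub_T) ?_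
    intro y
    have htr := abs_sub_le (u y) (ub y) (ut y)
    rw [abs_sub_comm (ub y) (ut y)] at htr
    exact htr
  by_cases hct : |ct| ≤ h / 2 * (|nt 0| + |nt 1|)
  · by_cases hcb : |cb| ≤ h / 2 * (|nb 0| + |nb 1|)
    · -- both boundaries cross the central cell: use inverse stability
      have hCS := hC₀ nt nb ct cb hnt hnb hct hcb
      have hsum2 : ∑ q ∈ SIdx, |cellAvg h xb q ut - cellAvg h xb q ub| ≤ (D + E) + (D + E) := by
        calc ∑ q ∈ SIdx, |cellAvg h xb q ut - cellAvg h xb q ub|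
            ≤ ∑ q ∈ SIdx, (|z q - cellAvg h xb q ut| + |z q - cellAvg h xb q ub|) := by
              apply Finset.sum_le_sum
              intro q hq
              have heq : cellAvg h xb q ut - cellAvg h xb q ub
                  = (z q - cellAvg h xb q ub) + (-(z q - cellAvg h xb q ut)) := by ring
              rw [heq]
              refine (abs_add_le _ _).trans ?_
              rw [abs_neg]
              linarith
          _ = (∑ q ∈ SIdx, |z q - cellAvg h xb q ut|)
                + ∑ q ∈ SIdx, |z q - cellAvg h xb q ub| := Finset.sum_add_distrib
          _ ≤ (D + E) + (D + E) := add_le_add hsum_ut hsum_ub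
      have hfin : ∫ y in S, |ut y - ub y| ≤ C₀ * h ^ 2 * ((D + E) + (D + E)) :=
        le_trans hCS (mul_le_mul_of_nonneg_left hsum2 (mul_nonneg hC₀0 hh2))
      have step2 : ∫ y in T, |u y - ub y| ≤ B :=
        setIntegral_mono_set hi_uub_S
          (Filter.Eventually.of_forall fun y => abs_nonneg _) hTsub.eventuallyLE
      have step3 : ∫ y in T, |ut y - ub y| ≤ ∫ y in S, |ut y - ub y| :=
        setIntegral_mono_set hi_utub_S
          (Filter.Eventually.of_forall fun y => abs_nonneg _) hTsub.eventuallyLE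
      have hC1 : C₀ * (h ^ 2 * D) ≤ C₀ * B := mul_le_mul_of_nonneg_left hDB hC₀0
      have hC2 : C₀ * (h ^ 2 * E) ≤ C₀ * (h ^ 2 * (K * N)) :=
        mul_le_mul_of_nonneg_left hhE hC₀0
      linarith [step1, step2, step3, hfin, hC1, hC2, hf2, hf3]
    · -- the best L¹ half-plane is constant on the central cell
      rw [not_le] at hcb
      obtain ⟨ε, hε, hconst⟩ := LRB.half_const hh hcb
      have ht1 : ∫ y in T, |u y - ub y|
          = h ^ 2 * |cellAvg h xb (0, 0) u - cellAvg h xb (0, 0) ub| := by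
        rw [LRB.avg_sub hh]
        exact LRB.int_abs_const hTmeas huT hubT (fun y => (hu01 y).1) (fun y => (hu01 y).2)
          hε hconst
      have ht2 : ∫ y in T, |ut y - ub y|
          = h ^ 2 * |cellAvg h xb (0, 0) ut - cellAvg h xb (0, 0) ub| := by
        rw [LRB.avg_sub hh]
        exact LRB.int_abs_const hTmeas hutT hubT (fun y => (hut01 y).1) (fun y => (hut01 y).2)
          hε hconst
      have hA1 : |cellAvg h xb (0, 0) u - cellAvg h xb (0, 0) ub| ≤ D :=
        Finset.single_le_sum (f := fun q => |cellAvg h xb q u - cellAvg h xb q ub|)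
          (fun q _ => abs_nonneg _) hz00
      have hA2 : |cellAvg h xb (0, 0) ut - cellAvg h xb (0, 0) ub| ≤ (D + E) + (D + E) := by
        have heq : cellAvg h xb (0, 0) ut - cellAvg h xb (0, 0) ub
            = (z (0, 0) - cellAvg h xb (0, 0) ub) + (-(z (0, 0) - cellAvg h xb (0, 0) ut)) := by
          ring
        have k1 : |z (0, 0) - cellAvg h xb (0, 0) ut| ≤ D + E :=
          le_trans (Finset.single_le_sum
            (f := fun q => |z q - cellAvg h xb q ut|) (fun q _ => abs_nonneg _) hz00) hsum_ut
        have k2 : |z (0, 0) - cellAvg h xb (0, 0) ub| ≤ D + E :=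
          le_trans (Finset.single_le_sum
            (f := fun q => |z q - cellAvg h xb q ub|) (fun q _ => abs_nonneg _) hz00) hsum_ub
        rw [heq]
        refine (abs_add_le _ _).trans ?_
        rw [abs_neg]
        linarith
      have hmul1 : h ^ 2 * |cellAvg h xb (0, 0) u - cellAvg h xb (0, 0) ub| ≤ h ^ 2 * D :=
        mul_le_mul_of_nonneg_left hA1 hh2
      have hmul2 : h ^ 2 * |cellAvg h xb (0, 0) ut - cellAvg h xb (0, 0) ub|
          ≤ h ^ 2 * ((D + E) + (D + E)) :=
        mul_le_mul_of_nonneg_left hA2 hh2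
      linarith [step1, ht1, ht2, hmul1, hmul2, hDB, hhE, hf2, hf3, hf4]
  · -- the ℓ¹ best-fit half-plane is constant on the central cell
    rw [not_le] at hct
    obtain ⟨ε, hε, hconst⟩ := LRB.half_const hh hct
    have hLHS : ∫ y in T, |u y - ut y|
        = h ^ 2 * |cellAvg h xb (0, 0) u - cellAvg h xb (0, 0) ut| := by
      rw [LRB.avg_sub hh]
      exact LRB.int_abs_const hTmeas huT hutT (fun y => (hu01 y).1) (fun y => (hu01 y).2)
        hε hconst
    have hA : |cellAvg h xb (0, 0) u - cellAvg h xb (0, 0) ut| ≤ (D + E) + E := by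
      have heq : cellAvg h xb (0, 0) u - cellAvg h xb (0, 0) ut
          = (z (0, 0) - cellAvg h xb (0, 0) ut) + (-(η (0, 0))) := by
        rw [hz _ hz00]; ring
      have k1 : |z (0, 0) - cellAvg h xb (0, 0) ut| ≤ D + E :=
        le_trans (Finset.single_le_sum
          (f := fun q => |z q - cellAvg h xb q ut|) (fun q _ => abs_nonneg _) hz00) hsum_ut
      have k2 : |η (0, 0)| ≤ E :=
        Finset.single_le_sum (f := fun q => |η q|) (fun q _ => abs_nonneg _) hz00
      rw [heq]
      refine (abs_add_le _ _).trans ?_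
      rw [abs_neg]
      linarith
    have hmul : h ^ 2 * |cellAvg h xb (0, 0) u - cellAvg h xb (0, 0) ut|
        ≤ h ^ 2 * ((D + E) + E) := mul_le_mul_of_nonneg_left hA hh2
    linarith [hLHS, hmul, hDB, hhE, hf2, hf3]

end
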